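/- Removing the k spike vertices from the clause gadget 𝒢_k leaves a path on 2k + 2 vertices, whose independence number is k + 1, strictly less than α(𝒢_k) = k + 2. -/

import Mathlib

open SimpleGraph

/-- The maximum size of an independent set of `G` contained in the vertex set `A`
(i.e. the independence number of the induced subgraph `G[A]`). -/
noncomputable def alphaOn {V : Type*} [Fintype V] (G : SimpleGraph V) (A : Set V) : ℕ :=
  sSup {n | ∃ s : Finset V, ↑s ⊆ A ∧ (↑s : Set V).Pairwise (fun a b => ¬ G.Adj a b) ∧ s.card = n}

/-- The open neighborhood of a set of vertices. -/
def nbhd {V : Type*} (G : SimpleGraph V) (S : Set V) : Set V :=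
  {v | v ∉ S ∧ ∃ u ∈ S, G.Adj u v}

/-- `v` is α-critical in the induced subgraph `G[A]`. -/
def critOn {V : Type*} [Fintype V] (G : SimpleGraph V) (A : Set V) (v : V) : Prop :=
  alphaOn G A = 1 + alphaOn G (A \ {v})

/-- For a tree `T` rooted at `r`, the vertex set of the subtree rooted at `a`:
those vertices reachable from `a` without passing through `r`. -/
def descend {V : Type*} (T : SimpleGraph V) (r a : V) : Set V :=
  {v | ∃ p : T.Walk a v, r ∉ p.support}

/-- The connected component of `v₀` in `G - X`: vertices reachable from `v₀` avoiding `X`. -/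
def avoidComp {V : Type*} (G : SimpleGraph V) (X : Set V) (v₀ : V) : Set V :=
  {v | ∃ p : G.Walk v₀ v, ∀ x ∈ p.support, x ∉ X}

/-- Vertices of the clause gadget `𝒢 k`: `L j` is the left vertex `l_{j+1}` (for `j : Fin (k+1)`,
giving `l_1, …, l_{k+1}`), `R j` is the right vertex `r_j` (giving `r_0, …, r_k`), and
`S j` is the spike vertex `s_{j+1}` (giving `s_1, …, s_k`). -/
inductive GadgetV (k : ℕ) : Type
  | L : Fin (k + 1) → GadgetV k
  | R : Fin (k + 1) → GadgetV k
  | S : Fin k → GadgetV k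
  deriving DecidableEq, Fintype

/-- The edges of the clause gadget: the connecting edges `r_j l_{j+1}` and, for each
triangle `T_{m+1}` (with `m : Fin k`), the triangle edges `l_{m+1} r_{m+1}`,
`l_{m+1} s_{m+1}` and `r_{m+1} s_{m+1}`. -/
def gadgetRel (k : ℕ) : GadgetV k → GadgetV k → Prop := fun x y =>
  (∃ j : Fin (k + 1), x = .R j ∧ y = .L j) ∨
  (∃ m : Fin k,
    (x = .L m.castSucc ∧ y = .R m.succ) ∨
    (x = .L m.castSucc ∧ y = .S m) ∨
    (x = .R m.succ ∧ y = .S m))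

/-- The clause gadget `𝒢 k`. -/
def gadget (k : ℕ) : SimpleGraph (GadgetV k) := SimpleGraph.fromRel (gadgetRel k)

namespace StmtAux

variable {k : ℕ}

lemma finExists {n : ℕ} {P : Fin n → Prop} : (∃ i, P i) ↔ ∃ m, ∃ h : m < n, P ⟨m, h⟩ :=
  ⟨fun ⟨i, h⟩ => ⟨i.val, i.isLt, h⟩, fun ⟨m, h, hp⟩ => ⟨⟨m, h⟩, hp⟩⟩

lemma adj_LL (i j : Fin (k+1)) : ¬ (gadget k).Adj (.L i) (.L j) := by
  simp [gadget, SimpleGraph.fromRel_adj, gadgetRel]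

lemma adj_RR (i j : Fin (k+1)) : ¬ (gadget k).Adj (.R i) (.R j) := by
  simp [gadget, SimpleGraph.fromRel_adj, gadgetRel]

lemma adj_SS (m m' : Fin k) : ¬ (gadget k).Adj (.S m) (.S m') := by
  simp [gadget, SimpleGraph.fromRel_adj, gadgetRel]

lemma adj_LR (i j : Fin (k+1)) :
    (gadget k).Adj (.L i) (.R j) ↔ (j.val = i.val + 1 ∨ i = j) := by
  simp [gadget, SimpleGraph.fromRel_adj, gadgetRel, finExists, Fin.ext_iff]
  omega

lemma adj_RL (i j : Fin (k+1)) :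
    (gadget k).Adj (.R j) (.L i) ↔ (j.val = i.val + 1 ∨ i = j) := by
  rw [(gadget k).adj_comm]; exact adj_LR i j

lemma adj_LS (i : Fin (k+1)) (m : Fin k) :
    (gadget k).Adj (.L i) (.S m) ↔ i.val = m.val := by
  simp [gadget, SimpleGraph.fromRel_adj, gadgetRel, finExists, Fin.ext_iff]
  omega

lemma adj_RS (j : Fin (k+1)) (m : Fin k) :
    (gadget k).Adj (.R j) (.S m) ↔ j.val = m.val + 1 := by
  simp [gadget, SimpleGraph.fromRel_adj, gadgetRel, finExists, Fin.ext_iff]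

lemma alphaOn_eq {V : Type*} [Fintype V] (G : SimpleGraph V) (A : Set V) (m : ℕ)
    (hmem : ∃ s : Finset V, ↑s ⊆ A ∧ (↑s : Set V).Pairwise (fun a b => ¬ G.Adj a b) ∧ s.card = m)
    (hub : ∀ s : Finset V, ↑s ⊆ A → (↑s : Set V).Pairwise (fun a b => ¬ G.Adj a b) →
      s.card ≤ m) :
    alphaOn G A = m := by
  have hub' : ∀ n ∈ {n | ∃ s : Finset V, ↑s ⊆ A ∧
      (↑s : Set V).Pairwise (fun a b => ¬ G.Adj a b) ∧ s.card = n}, n ≤ m := by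
    rintro n ⟨s, h1, h2, rfl⟩; exact hub s h1 h2
  exact le_antisymm (csSup_le ⟨m, hmem⟩ hub') (le_csSup ⟨m, hub'⟩ hmem)

def cS (k : ℕ) : Set (GadgetV k) := {v : GadgetV k | ∃ m, v = GadgetV.S m}ᶜ

def gToFin (k : ℕ) : (cS k) → Fin (2*k+2)
  | ⟨.L j, _⟩ => ⟨2*j.val+1, by have := j.isLt; omega⟩
  | ⟨.R j, _⟩ => ⟨2*j.val, by have := j.isLt; omega⟩
  | ⟨.S m, h⟩ => absurd ⟨m, rfl⟩ h

def finToG (k : ℕ) (i : Fin (2*k+2)) : (cS k) :=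
  if h : i.val % 2 = 0 then
    ⟨.R ⟨i.val/2, by have := i.isLt; omega⟩, by rintro ⟨m, hm⟩; cases hm⟩
  else
    ⟨.L ⟨i.val/2, by have := i.isLt; omega⟩, by rintro ⟨m, hm⟩; cases hm⟩

def gIso (k : ℕ) : ((gadget k).induce (cS k)) ≃g SimpleGraph.pathGraph (2*k+2) where
  toFun := gToFin k
  invFun := finToG k
  left_inv := by
    rintro ⟨(j | j | m), hv⟩
    · show finToG k ⟨2*j.val+1, _⟩ = _
      rw [finToG]
      split_ifs with h
      · exfalso; simp only [Fin.val_mk] at h; omega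
      · apply Subtype.ext
        show GadgetV.L _ = GadgetV.L j
        congr 1
        ext
        simp only [Fin.val_mk]
        omega
    · show finToG k ⟨2*j.val, _⟩ = _
      rw [finToG]
      split_ifs with h
      · apply Subtype.ext
        show GadgetV.R _ = GadgetV.R j
        congr 1
        ext
        simp only [Fin.val_mk]
        omega
      · exfalso; simp only [Fin.val_mk] at h; omega
    · exact absurd ⟨m, rfl⟩ hv
  right_inv := by
    intro i
    rw [finToG]
    split_ifs with h
    · show (⟨2*(i.val/2), _⟩ : Fin _) = i
      ext; simp only [Fin.val_mk]; omega
    · show (⟨2*(i.val/2)+1, _⟩ : Fin _) = i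
      ext; simp only [Fin.val_mk]; omega
  map_rel_iff' := by
    rintro ⟨(i | i | m), ha⟩ ⟨(j | j | m'), hb⟩
    case S.L | S.R | S.S => exact (ha ⟨_, rfl⟩).elim
    case L.S | R.S => exact (hb ⟨_, rfl⟩).elim
    · show (pathGraph (2*k+2)).Adj ⟨2*i.val+1, by have := i.isLt; omega⟩
          ⟨2*j.val+1, by have := j.isLt; omega⟩ ↔ (gadget k).Adj (.L i) (.L j)
      rw [pathGraph_adj]
      simp only [Fin.val_mk]
      constructor
      · intro h; exfalso; omega
      · intro h; exact absurd h (adj_LL i j)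
    · show (pathGraph (2*k+2)).Adj ⟨2*i.val+1, by have := i.isLt; omega⟩
          ⟨2*j.val, by have := j.isLt; omega⟩ ↔ (gadget k).Adj (.L i) (.R j)
      rw [pathGraph_adj, adj_LR i j]
      simp only [Fin.val_mk, Fin.ext_iff]
      omega
    · show (pathGraph (2*k+2)).Adj ⟨2*i.val, by have := i.isLt; omega⟩
          ⟨2*j.val+1, by have := j.isLt; omega⟩ ↔ (gadget k).Adj (.R i) (.L j)
      rw [pathGraph_adj, adj_RL j i]
      simp only [Fin.val_mk, Fin.ext_iff]
      omega
    · show (pathGraph (2*k+2)).Adj ⟨2*i.val, by have := i.isLt; omega⟩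
          ⟨2*j.val, by have := j.isLt; omega⟩ ↔ (gadget k).Adj (.R i) (.R j)
      rw [pathGraph_adj]
      simp only [Fin.val_mk]
      constructor
      · intro h; exfalso; omega
      · intro h; exact absurd h (adj_RR i j)

def projIdx : GadgetV k → Fin (k+1)
  | .L j => j
  | .R j => j
  | .S m => m.castSucc

def projIdx2 : GadgetV k → Fin (k+2)
  | .L j => ⟨j.val+1, by have := j.isLt; omega⟩
  | .R j => ⟨j.val, by have := j.isLt; omega⟩
  | .S m => ⟨m.val+1, by have := m.isLt; omega⟩

end StmtAux


open StmtAux in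
theorem stmt13 (k : ℕ) (hk : 1 ≤ k) :
    Nonempty (((gadget k).induce {v : GadgetV k | ∃ m, v = GadgetV.S m}ᶜ) ≃g
        SimpleGraph.pathGraph (2 * k + 2)) ∧
    alphaOn (gadget k) {v : GadgetV k | ∃ m, v = GadgetV.S m}ᶜ = k + 1 ∧
    alphaOn (gadget k) Set.univ = k + 2 ∧
    alphaOn (gadget k) {v : GadgetV k | ∃ m, v = GadgetV.S m}ᶜ <
      alphaOn (gadget k) Set.univ := by
  have h1 : alphaOn (gadget k) {v : GadgetV k | ∃ m, v = GadgetV.S m}ᶜ = k + 1 := by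
    apply alphaOn_eq
    · refine ⟨Finset.univ.image GadgetV.L, ?_, ?_, ?_⟩
      · rintro v hv
        simp only [Finset.coe_image, Finset.coe_univ, Set.image_univ, Set.mem_range] at hv
        obtain ⟨j, rfl⟩ := hv
        rintro ⟨m, hm⟩; cases hm
      · rintro a ha b hb hne
        simp only [Finset.coe_image, Finset.coe_univ, Set.image_univ, Set.mem_range] at ha hb
        obtain ⟨i, rfl⟩ := ha
        obtain ⟨j, rfl⟩ := hb
        exact adj_LL i j
      · rw [Finset.card_image_of_injective _ (fun a b h => by injection h), Finset.card_univ,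
          Fintype.card_fin]
    · intro s hsub hpw
      have hle : s.card ≤ (Finset.univ : Finset (Fin (k+1))).card := by
        apply Finset.card_le_card_of_injOn projIdx (fun a _ => Finset.mem_univ _)
        rintro (i | i | m) ha (j | j | m') hb hfe <;>
          simp only [projIdx] at hfe
        case L.L => rw [hfe]
        case R.R => rw [hfe]
        case S.L | S.R | S.S => exact ((hsub ha) ⟨_, rfl⟩).elim
        case L.S | R.S => exact ((hsub hb) ⟨_, rfl⟩).elim
        case L.R =>
          exact absurd ((adj_LR i j).2 (Or.inr hfe)) (hpw ha hb (by simp))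
        case R.L =>
          exact absurd ((adj_RL j i).2 (Or.inr hfe.symm)) (hpw ha hb (by simp))
      simpa using hle
  have h2 : alphaOn (gadget k) (Set.univ : Set (GadgetV k)) = k + 2 := by
    apply alphaOn_eq
    · refine ⟨insert (GadgetV.R 0) (insert (GadgetV.L (Fin.last k))
        (Finset.univ.image GadgetV.S)), fun v _ => trivial, ?_, ?_⟩
      · rintro a ha b hb hne
        simp only [Finset.coe_insert, Set.mem_insert_iff, Finset.coe_image, Finset.coe_univ,
          Set.image_univ, Set.mem_range] at ha hb
        have hlast : (Fin.last k).val = k := rfl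
        have h0 : ((0 : Fin (k+1))).val = 0 := rfl
        rcases ha with rfl | rfl | ⟨m, rfl⟩ <;> rcases hb with rfl | rfl | ⟨m', rfl⟩
        · exact absurd rfl hne
        · rw [adj_RL]; push_neg; refine ⟨by omega, ?_⟩
          intro h; rw [Fin.ext_iff] at h; omega
        · rw [adj_RS]; omega
        · rw [(gadget k).adj_comm, adj_RL]; push_neg; refine ⟨by omega, ?_⟩
          intro h; rw [Fin.ext_iff] at h; omega
        · exact absurd rfl hne
        · rw [adj_LS]; have := m'.isLt; omega
        · rw [(gadget k).adj_comm, adj_RS]; omega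
        · rw [(gadget k).adj_comm, adj_LS]; have := m.isLt; omega
        · exact adj_SS m m'
      · have hR : GadgetV.R (0 : Fin (k+1)) ∉
            insert (GadgetV.L (Fin.last k)) (Finset.univ.image GadgetV.S) := by simp
        have hL : GadgetV.L (Fin.last k) ∉ Finset.univ.image GadgetV.S := by simp
        rw [Finset.card_insert_of_notMem hR, Finset.card_insert_of_notMem hL,
          Finset.card_image_of_injective _ (fun a b h => by injection h), Finset.card_univ,
          Fintype.card_fin]
    · intro s hsub hpw
      have hle : s.card ≤ (Finset.univ : Finset (Fin (k+2))).card := by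
        apply Finset.card_le_card_of_injOn projIdx2 (fun a _ => Finset.mem_univ _)
        rintro (i | i | m) ha (j | j | m') hb hfe <;>
          simp only [projIdx2, Fin.mk.injEq] at hfe
        case L.L => rw [show i = j from Fin.ext (by omega)]
        case R.R => rw [show i = j from Fin.ext (by omega)]
        case S.S => rw [show m = m' from Fin.ext (by omega)]
        case L.R =>
          exact absurd ((adj_LR i j).2 (Or.inl hfe.symm)) (hpw ha hb (by simp))
        case R.L =>
          exact absurd ((adj_RL j i).2 (Or.inl hfe)) (hpw ha hb (by simp))
        case L.S =>
          exact absurd ((adj_LS i m').2 (by omega)) (hpw ha hb (by simp))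
        case S.L =>
          exact absurd ((adj_LS j m).2 (by omega)).symm (hpw ha hb (by simp))
        case R.S =>
          exact absurd ((adj_RS i m').2 (by omega)) (hpw ha hb (by simp))
        case S.R =>
          exact absurd ((adj_RS j m).2 (by omega)).symm (hpw ha hb (by simp))
      simpa using hle
  refine ⟨⟨?_⟩, h1, h2, by omega⟩
  have : 2 * k + 2 = 2 * k + 2 := rfl
  exact (gIso k)
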